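/- For two Gaussians P = N(μ_i, σ_i²) and Q = N(μ_j, σ_j²), the CRPS divergence equals A(μ_i − μ_j, √(σ_i² + σ_j²)) − (σ_i + σ_j)/√π, where A(μ, σ) = 2σφ(μ/σ) + μ(2Φ(μ/σ) − 1). -/

import Mathlib

open MeasureTheory ProbabilityTheory Real

/-- standard normal density -/
noncomputable def stdGaussPDF (t : ℝ) : ℝ := (Real.sqrt (2 * Real.pi))⁻¹ * Real.exp (-(t ^ 2) / 2)

/-- standard normal cumulative distribution function -/
noncomputable def stdGaussCDF (z : ℝ) : ℝ := ∫ t in Set.Iio z, stdGaussPDF t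

/-- `A(μ, σ) = 2σφ(μ/σ) + μ(2Φ(μ/σ) − 1)` -/
noncomputable def A (μ σ : ℝ) : ℝ :=
  2 * σ * stdGaussPDF (μ / σ) + μ * (2 * stdGaussCDF (μ / σ) - 1)

namespace CRPSAux

open Set Filter
open scoped NNReal ENNReal

noncomputable def vv (s : ℝ) : ℝ≥0 := ⟨s ^ 2, sq_nonneg s⟩

lemma vv_coe (s : ℝ) : ((vv s : ℝ≥0) : ℝ) = s ^ 2 := rfl

lemma vv_ne_zero {s : ℝ} (hs : 0 < s) : vv s ≠ 0 := by
  intro h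
  apply_fun (fun x => (x : ℝ)) at h
  rw [vv_coe] at h
  simp only [NNReal.coe_zero] at h
  nlinarith

lemma sqrt_two_pi_pos : 0 < Real.sqrt (2 * π) :=
  Real.sqrt_pos.2 (by positivity)

lemma pdf_eq {s : ℝ} (hs : 0 < s) (m x : ℝ) :
    gaussianPDFReal m (vv s) x
      = (s * Real.sqrt (2 * π))⁻¹ * Real.exp (-(x - m) ^ 2 / (2 * s ^ 2)) := by
  simp only [gaussianPDFReal, vv_coe]
  congr 2
  rw [show 2 * π * s ^ 2 = s ^ 2 * (2 * π) by ring, Real.sqrt_mul (by positivity),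
    Real.sqrt_sq hs.le]

lemma pdf_scale {s : ℝ} (hs : 0 < s) (m x : ℝ) :
    gaussianPDFReal m (vv s) x = s⁻¹ * stdGaussPDF ((x - m) / s) := by
  rw [pdf_eq hs, stdGaussPDF]
  rw [show -(((x - m) / s) ^ 2) / 2 = -(x - m) ^ 2 / (2 * s ^ 2) by ring]
  rw [mul_inv, mul_assoc]

lemma stdGaussPDF_even (t : ℝ) : stdGaussPDF (-t) = stdGaussPDF t := by
  simp [stdGaussPDF, neg_pow]

lemma continuous_stdGaussPDF : Continuous stdGaussPDF := by
  unfold stdGaussPDF; fun_prop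

lemma integrable_stdGaussPDF : Integrable stdGaussPDF := by
  have h : stdGaussPDF = fun x => (Real.sqrt (2 * π))⁻¹ * Real.exp (-(2⁻¹ : ℝ) * x ^ 2) := by
    ext x; rw [stdGaussPDF]; congr 1; ring_nf
  rw [h]
  exact (integrable_exp_neg_mul_sq (by norm_num)).const_mul _

lemma integral_stdGaussPDF : ∫ t, stdGaussPDF t = 1 := by
  have h : ∫ t, stdGaussPDF t = (Real.sqrt (2 * π))⁻¹ * ∫ t, Real.exp (-(2⁻¹ : ℝ) * t ^ 2) := by
    rw [← integral_const_mul]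
    congr 1; ext t; rw [stdGaussPDF]; congr 1; ring_nf
  rw [h, integral_gaussian, show π / (2⁻¹ : ℝ) = 2 * π by ring]
  exact inv_mul_cancel₀ sqrt_two_pi_pos.ne'

/-- substitution: translation on `Iio` -/
lemma setIntegral_Iio_comp_sub (g : ℝ → ℝ) (c d : ℝ) :
    ∫ x in Iio c, g (x - d) = ∫ x in Iio (c - d), g x := by
  rw [← integral_indicator measurableSet_Iio, ← integral_indicator measurableSet_Iio,
    ← integral_sub_right_eq_self (Set.indicator (Iio (c - d)) g) d]
  congr 1
  ext x
  simp only [Set.indicator_apply, mem_Iio, sub_lt_sub_iff_right]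

/-- substitution: scaling on `Iio` -/
lemma setIntegral_Iio_comp_div (g : ℝ → ℝ) (c : ℝ) {s : ℝ} (hs : 0 < s) :
    ∫ x in Iio c, g (x / s) = s * ∫ x in Iio (c / s), g x := by
  have hinv : (0 : ℝ) < s⁻¹ := by positivity
  rw [← integral_indicator measurableSet_Iio, ← integral_indicator measurableSet_Iio]
  have key : ∀ x, Set.indicator (Iio c) (fun x => g (x / s)) x
      = Set.indicator (Iio (c / s)) g (s⁻¹ * x) := by
    intro x
    have hiff : s⁻¹ * x < c / s ↔ x < c := by
      rw [div_eq_inv_mul]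
      exact mul_lt_mul_iff_right₀ hinv
    simp only [Set.indicator_apply, mem_Iio, div_eq_inv_mul, mul_lt_mul_iff_right₀ hinv]
  rw [integral_congr_ae (Eventually.of_forall key),
    MeasureTheory.Measure.integral_comp_mul_left (Set.indicator (Iio (c / s)) g) s⁻¹,
    abs_of_pos (by positivity : (0:ℝ) < s⁻¹⁻¹), inv_inv, smul_eq_mul]

lemma cdf_eq {s : ℝ} (hs : 0 < s) (m c : ℝ) :
    ∫ x in Iio c, gaussianPDFReal m (vv s) x = stdGaussCDF ((c - m) / s) := by
  have h : ∀ x ∈ Iio c, gaussianPDFReal m (vv s) x = s⁻¹ * stdGaussPDF ((x - m) / s) :=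
    fun x _ => pdf_scale hs m x
  rw [setIntegral_congr_fun measurableSet_Iio h, integral_const_mul,
    show (fun x => stdGaussPDF ((x - m) / s))
        = fun x => (fun y => stdGaussPDF (y / s)) (x - m) from rfl,
    setIntegral_Iio_comp_sub (fun y => stdGaussPDF (y / s)) c m,
    setIntegral_Iio_comp_div stdGaussPDF (c - m) hs,
    ← mul_assoc, inv_mul_cancel₀ hs.ne', one_mul]
  rfl

lemma stdGaussCDF_add_neg (x : ℝ) : stdGaussCDF x + stdGaussCDF (-x) = 1 := by
  have h1 : stdGaussCDF (-x) = ∫ t in Ioi x, stdGaussPDF t := by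
    rw [stdGaussCDF, ← integral_Iic_eq_integral_Iio]
    have h2 : ∫ t in Iic (-x), stdGaussPDF t = ∫ t in Iic (-x), stdGaussPDF (-t) := by
      refine setIntegral_congr_fun measurableSet_Iic fun t _ => ?_
      rw [stdGaussPDF_even]
    rw [h2, integral_comp_neg_Iic, neg_neg, ← integral_Ici_eq_integral_Ioi]
  rw [stdGaussCDF, h1, ← integral_Ici_eq_integral_Ioi,
    intervalIntegral.integral_Iio_add_Ici integrable_stdGaussPDF.integrableOn integrable_stdGaussPDF.integrableOn]
  exact integral_stdGaussPDF

lemma stdGaussCDF_neg (x : ℝ) : stdGaussCDF (-x) = 1 - stdGaussCDF x := by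
  have := stdGaussCDF_add_neg x; linarith

lemma integral_pdf_one {s : ℝ} (hs : 0 < s) (m : ℝ) :
    ∫ x, gaussianPDFReal m (vv s) x = 1 :=
  integral_gaussianPDFReal_eq_one m (vv_ne_zero hs)

lemma integrable_mul_pdf {s : ℝ} (hs : 0 < s) (m : ℝ) :
    Integrable (fun x => x * gaussianPDFReal m (vv s) x) := by
  have hb : (0 : ℝ) < (2 * s ^ 2)⁻¹ := by positivity
  have h1 : Integrable
      (fun t : ℝ => (s * Real.sqrt (2 * π))⁻¹ * (t * Real.exp (-(2 * s ^ 2)⁻¹ * t ^ 2))) :=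
    (integrable_mul_exp_neg_mul_sq hb).const_mul _
  have h2 := h1.comp_sub_right m
  have h3 : Integrable (fun x : ℝ => (x - m) * gaussianPDFReal m (vv s) x) := by
    refine h2.congr ?_
    filter_upwards with x
    rw [pdf_eq hs]
    rw [show -(x - m) ^ 2 / (2 * s ^ 2) = -(2 * s ^ 2)⁻¹ * (x - m) ^ 2 by ring]
    ring
  have h4 := (integrable_gaussianPDFReal m (vv s)).const_mul m
  refine (h3.add h4).congr ?_
  filter_upwards with x
  simp only [Pi.add_apply]
  ring

lemma integrable_abs_mul_pdf {s : ℝ} (hs : 0 < s) (m : ℝ) :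
    Integrable (fun x => |x| * gaussianPDFReal m (vv s) x) := by
  refine (integrable_mul_pdf hs m).abs.congr ?_
  filter_upwards with x
  rw [abs_mul, abs_of_nonneg (gaussianPDFReal_nonneg _ _ _)]

lemma pdf_tendsto_atTop {s : ℝ} (hs : 0 < s) (m : ℝ) :
    Tendsto (fun z => gaussianPDFReal m (vv s) z) atTop (nhds 0) := by
  have h0 : Tendsto (fun z : ℝ => z - m) atTop atTop :=
    tendsto_atTop_add_const_right atTop (-m) tendsto_id
  have hsq : Tendsto (fun z : ℝ => (z - m) ^ 2) atTop atTop :=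
    (tendsto_pow_atTop two_ne_zero).comp h0
  have hdiv : Tendsto (fun z : ℝ => (z - m) ^ 2 / (2 * s ^ 2)) atTop atTop :=
    hsq.atTop_div_const (by positivity)
  have hneg : Tendsto (fun z : ℝ => -(z - m) ^ 2 / (2 * s ^ 2)) atTop atBot := by
    simp only [neg_div]
    exact tendsto_neg_atBot_iff.mpr hdiv
  have h2 := Real.tendsto_exp_atBot.comp hneg
  have h3 := h2.const_mul ((s * Real.sqrt (2 * π))⁻¹)
  rw [mul_zero] at h3
  refine h3.congr fun z => ?_
  rw [pdf_eq hs]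
  simp [Function.comp_apply]

lemma pdf_tendsto_atBot {s : ℝ} (hs : 0 < s) (m : ℝ) :
    Tendsto (fun z => gaussianPDFReal m (vv s) z) atBot (nhds 0) := by
  have h0 : Tendsto (fun z : ℝ => m - z) atBot atTop := by
    apply tendsto_atTop_add_const_left atBot m
    exact tendsto_neg_atBot_atTop
  have hsq : Tendsto (fun z : ℝ => (z - m) ^ 2) atBot atTop := by
    refine ((tendsto_pow_atTop two_ne_zero).comp h0).congr fun z => ?_
    simp only [Function.comp_apply]
    ring
  have hdiv : Tendsto (fun z : ℝ => (z - m) ^ 2 / (2 * s ^ 2)) atBot atTop :=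
    hsq.atTop_div_const (by positivity)
  have hneg : Tendsto (fun z : ℝ => -(z - m) ^ 2 / (2 * s ^ 2)) atBot atBot := by
    simp only [neg_div]
    exact tendsto_neg_atBot_iff.mpr hdiv
  have h2 := Real.tendsto_exp_atBot.comp hneg
  have h3 := h2.const_mul ((s * Real.sqrt (2 * π))⁻¹)
  rw [mul_zero] at h3
  refine h3.congr fun z => ?_
  rw [pdf_eq hs]
  simp [Function.comp_apply]

lemma hasDerivAt_pdf {s : ℝ} (hs : 0 < s) (m z : ℝ) :
    HasDerivAt (fun z => -(s ^ 2) * gaussianPDFReal m (vv s) z)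
      ((z - m) * gaussianPDFReal m (vv s) z) z := by
  have h1 : HasDerivAt (fun z : ℝ => -(z - m) ^ 2 / (2 * s ^ 2)) (-(z - m) / s ^ 2) z := by
    have hid : HasDerivAt (fun z : ℝ => z - m) 1 z := (hasDerivAt_id z).sub_const m
    have h2 := (hid.pow 2).neg.div_const (2 * s ^ 2)
    refine h2.congr_deriv ?_
    field_simp
    ring
  have h4 := (h1.exp.const_mul ((s * Real.sqrt (2 * π))⁻¹)).const_mul (-(s ^ 2))
  have hfun : (fun z => -(s ^ 2) * gaussianPDFReal m (vv s) z)
      = fun z => -(s ^ 2) * ((s * Real.sqrt (2 * π))⁻¹ * Real.exp (-(z - m) ^ 2 / (2 * s ^ 2))) := by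
    ext y; rw [pdf_eq hs]
  rw [hfun]
  refine h4.congr_deriv ?_
  rw [pdf_eq hs]
  field_simp

lemma mom {s : ℝ} (hs : 0 < s) (m : ℝ) :
    ∫ z, |z| * gaussianPDFReal m (vv s) z = A m s := by
  set g := fun z => gaussianPDFReal m (vv s) z with hg
  have hint_sub : Integrable (fun z => (z - m) * g z) := by
    refine ((integrable_mul_pdf hs m).sub ((integrable_gaussianPDFReal m (vv s)).const_mul m)).congr ?_
    filter_upwards with z
    simp only [Pi.sub_apply, hg]
    ring
  -- FTC on Ioi 0
  have hIoi : ∫ z in Ioi (0:ℝ), (z - m) * g z = s ^ 2 * g 0 := by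
    have := integral_Ioi_of_hasDerivAt_of_tendsto' (f := fun z => -(s ^ 2) * g z)
      (f' := fun z => (z - m) * g z) (a := 0)
      (fun x _ => hasDerivAt_pdf hs m x) hint_sub.integrableOn
      (by simpa using ((pdf_tendsto_atTop hs m).const_mul (-(s^2))))
    rw [this]; ring
  have hIic : ∫ z in Iic (0:ℝ), (z - m) * g z = -(s ^ 2) * g 0 := by
    have := integral_Iic_of_hasDerivAt_of_tendsto' (f := fun z => -(s ^ 2) * g z)
      (f' := fun z => (z - m) * g z) (a := 0)
      (fun x _ => hasDerivAt_pdf hs m x) hint_sub.integrableOn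
      (by simpa using ((pdf_tendsto_atBot hs m).const_mul (-(s^2))))
    rw [this]; ring
  have hg_int : Integrable g := integrable_gaussianPDFReal m (vv s)
  have hiio : ∫ z in Iio (0:ℝ), g z = stdGaussCDF (-(m / s)) := by
    rw [hg, cdf_eq hs m 0]
    norm_num [neg_div]
  have hici : ∫ z in Ici (0:ℝ), g z = stdGaussCDF (m / s) := by
    have htot := integral_pdf_one hs m
    have hsplit := intervalIntegral.integral_Iio_add_Ici (b := (0:ℝ)) hg_int.integrableOn hg_int.integrableOn
    rw [htot] at hsplit
    rw [hiio] at hsplit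
    rw [stdGaussCDF_neg] at hsplit
    linarith
  -- split the absolute moment
  have habs : Integrable (fun z => |z| * g z) := integrable_abs_mul_pdf hs m
  have hsplit := intervalIntegral.integral_Iio_add_Ici (b := (0:ℝ)) habs.integrableOn habs.integrableOn
  have hzn : ∫ z in Iio (0:ℝ), |z| * g z = -(∫ z in Iio (0:ℝ), z * g z) := by
    rw [← integral_neg]
    refine setIntegral_congr_fun measurableSet_Iio fun z hz => ?_
    rw [abs_of_neg hz]; ring
  have hzp : ∫ z in Ici (0:ℝ), |z| * g z = ∫ z in Ici (0:ℝ), z * g z := by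
    refine setIntegral_congr_fun measurableSet_Ici fun z hz => ?_
    rw [abs_of_nonneg hz]
  have hzmul : Integrable (fun z => z * g z) := integrable_mul_pdf hs m
  have hIio_z : ∫ z in Iio (0:ℝ), z * g z = m * stdGaussCDF (-(m / s)) - s ^ 2 * g 0 := by
    have e1 : ∫ z in Iio (0:ℝ), z * g z = ∫ z in Iic (0:ℝ), z * g z :=
      (integral_Iic_eq_integral_Iio).symm
    have e2 : ∫ z in Iic (0:ℝ), z * g z
        = (∫ z in Iic (0:ℝ), (z - m) * g z) + m * ∫ z in Iic (0:ℝ), g z := by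
      rw [← integral_const_mul, ← integral_add hint_sub.integrableOn
        (hg_int.integrableOn.const_mul m)]
      refine setIntegral_congr_fun measurableSet_Iic fun z _ => ?_
      ring
    have e3 : ∫ z in Iic (0:ℝ), g z = stdGaussCDF (-(m / s)) := by
      rw [integral_Iic_eq_integral_Iio]; exact hiio
    rw [e1, e2, hIic, e3]; ring
  have hIci_z : ∫ z in Ici (0:ℝ), z * g z = m * stdGaussCDF (m / s) + s ^ 2 * g 0 := by
    have e1 : ∫ z in Ici (0:ℝ), z * g z = ∫ z in Ioi (0:ℝ), z * g z :=
      integral_Ici_eq_integral_Ioi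
    have e2 : ∫ z in Ioi (0:ℝ), z * g z
        = (∫ z in Ioi (0:ℝ), (z - m) * g z) + m * ∫ z in Ioi (0:ℝ), g z := by
      rw [← integral_const_mul, ← integral_add hint_sub.integrableOn
        (hg_int.integrableOn.const_mul m)]
      refine setIntegral_congr_fun measurableSet_Ioi fun z _ => ?_
      ring
    have e3 : ∫ z in Ioi (0:ℝ), g z = stdGaussCDF (m / s) := by
      rw [← integral_Ici_eq_integral_Ioi]; exact hici
    rw [e1, e2, hIoi, e3]; ring
  have hg0 : g 0 = s⁻¹ * stdGaussPDF (m / s) := by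
    rw [hg]
    simp only
    rw [pdf_scale hs m 0]
    congr 1
    rw [show (0 - m) / s = -(m / s) by ring, stdGaussPDF_even]
  have hcdfneg : stdGaussCDF (-(m / s)) = 1 - stdGaussCDF (m / s) := stdGaussCDF_neg _
  rw [← hsplit, hzn, hzp, hIio_z, hIci_z, hg0, hcdfneg, A]
  field_simp
  ring

lemma sqrt_sum_sq_pos {s1 s2 : ℝ} (hs1 : 0 < s1) (hs2 : 0 < s2) :
    0 < Real.sqrt (s1 ^ 2 + s2 ^ 2) :=
  Real.sqrt_pos.2 (by positivity)

lemma sq_sqrt_sum {s1 s2 : ℝ} (hs1 : 0 < s1) (hs2 : 0 < s2) :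
    Real.sqrt (s1 ^ 2 + s2 ^ 2) ^ 2 = s1 ^ 2 + s2 ^ 2 :=
  Real.sq_sqrt (by positivity)

lemma prod_pdf {s1 s2 : ℝ} (hs1 : 0 < s1) (hs2 : 0 < s2) (m1 m2 z : ℝ) :
    ∫ x, gaussianPDFReal m1 (vv s1) x * gaussianPDFReal m2 (vv s2) (x - z)
      = gaussianPDFReal (m1 - m2) (vv (Real.sqrt (s1 ^ 2 + s2 ^ 2))) z := by
  set S := Real.sqrt (s1 ^ 2 + s2 ^ 2) with hSdef
  have hS : 0 < S := sqrt_sum_sq_pos hs1 hs2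
  have hSS : S ^ 2 = s1 ^ 2 + s2 ^ 2 := sq_sqrt_sum hs1 hs2
  set w := s1 * s2 / S with hwdef
  have hw : 0 < w := by positivity
  set c := (m1 * s2 ^ 2 + (z + m2) * s1 ^ 2) / S ^ 2 with hcdef
  have key : ∀ x, gaussianPDFReal m1 (vv s1) x * gaussianPDFReal m2 (vv s2) (x - z)
      = gaussianPDFReal (m1 - m2) (vv S) z * gaussianPDFReal c (vv w) x := by
    intro x
    rw [pdf_eq hs1, pdf_eq hs2, pdf_eq hS, pdf_eq hw]
    rw [mul_mul_mul_comm, ← Real.exp_add, mul_mul_mul_comm, ← Real.exp_add]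
    congr 1
    · rw [← mul_inv, ← mul_inv]
      congr 1
      rw [mul_mul_mul_comm, mul_mul_mul_comm (S) _ (w)]
      congr 1
      rw [hwdef]
      field_simp
    · congr 1
      rw [hcdef, hwdef]
      have h1 : S ≠ 0 := hS.ne'
      have h2 : s1 ≠ 0 := hs1.ne'
      have h3 : s2 ≠ 0 := hs2.ne'
      field_simp
      rw [hSS]
      ring
  rw [integral_congr_ae (Eventually.of_forall key), integral_const_mul,
    integral_pdf_one hw c, mul_one]

lemma measurable_sub2 : Measurable (fun p : ℝ × ℝ => p.1 - p.2) :=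
  measurable_fst.sub measurable_snd

lemma neg_one_sq_vv : (⟨(-1 : ℝ) ^ 2, sq_nonneg _⟩ : ℝ≥0) = 1 := by
  ext; norm_num

lemma map_sub_gaussian (x m2 : ℝ) {s2 : ℝ} (hs2 : 0 < s2) :
    (gaussianReal m2 (vv s2)).map (fun y => x - y) = gaussianReal (x - m2) (vv s2) := by
  have h1 : (fun y : ℝ => x - y) = (fun u : ℝ => u + x) ∘ (fun y : ℝ => (-1 : ℝ) * y) := by
    ext y; simp; ring
  rw [h1, ← Measure.map_map (by fun_prop) (by fun_prop)]
  rw [gaussianReal_map_const_mul (-1 : ℝ)]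
  rw [gaussianReal_map_add_const x]
  congr 1
  · ring
  · exact (congrArg (· * vv s2) neg_one_sq_vv).trans (one_mul _)

lemma integral_gaussianReal (m : ℝ) (v : ℝ≥0) (f : ℝ → ℝ) (hv : v ≠ 0) :
    ∫ x, f x ∂(gaussianReal m v) = ∫ x, gaussianPDFReal m v x * f x := by
  rw [gaussianReal_of_var_ne_zero m hv]
  have hd : gaussianPDF m v = fun x => ((gaussianPDFReal m v x).toNNReal : ℝ≥0∞) := by
    ext x
    rfl
  rw [hd, integral_withDensity_eq_integral_smul
    ((measurable_gaussianPDFReal m v).real_toNNReal) f]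
  congr 1
  ext x
  rw [NNReal.smul_def, smul_eq_mul, Real.coe_toNNReal _ (gaussianPDFReal_nonneg m v x)]

set_option maxHeartbeats 1000000 in
lemma conv_gauss {s1 s2 : ℝ} (hs1 : 0 < s1) (hs2 : 0 < s2) (m1 m2 : ℝ) :
    ((gaussianReal m1 (vv s1)).prod (gaussianReal m2 (vv s2))).map (fun p : ℝ × ℝ => p.1 - p.2)
      = gaussianReal (m1 - m2) (vv (Real.sqrt (s1 ^ 2 + s2 ^ 2))) := by
  have hv1 := vv_ne_zero hs1
  have hv2 := vv_ne_zero hs2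
  have hS : 0 < Real.sqrt (s1 ^ 2 + s2 ^ 2) := sqrt_sum_sq_pos hs1 hs2
  ext t ht
  rw [Measure.map_apply measurable_sub2 ht, Measure.prod_apply (measurable_sub2 ht)]
  have step1 : ∀ x : ℝ, (gaussianReal m2 (vv s2)) (Prod.mk x ⁻¹' ((fun p : ℝ × ℝ => p.1 - p.2) ⁻¹' t))
      = ∫⁻ y in t, ENNReal.ofReal (gaussianPDFReal m2 (vv s2) (x - y)) := by
    intro x
    have hpre : Prod.mk x ⁻¹' ((fun p : ℝ × ℝ => p.1 - p.2) ⁻¹' t) = (fun y => x - y) ⁻¹' t := rfl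
    rw [hpre, ← Measure.map_apply (by fun_prop) ht, map_sub_gaussian x m2 hs2,
      gaussianReal_apply _ hv2 t]
    refine setLIntegral_congr_fun ht (fun y hy => ?_)
    rw [gaussianPDF_def]
    exact congrArg ENNReal.ofReal (by rw [pdf_eq hs2, pdf_eq hs2]; congr 2; ring)
  simp_rw [step1]
  rw [gaussianReal_of_var_ne_zero m1 hv1,
    lintegral_withDensity_eq_lintegral_mul volume (measurable_gaussianPDF m1 (vv s1)) ?hmeas]
  case hmeas =>
    exact Measurable.lintegral_prod_right'
      (f := fun q : ℝ × ℝ => ENNReal.ofReal (gaussianPDFReal m2 (vv s2) (q.1 - q.2)))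
      (((measurable_gaussianPDFReal m2 (vv s2)).comp measurable_sub2).ennreal_ofReal)
  have swap : ∫⁻ x, gaussianPDF m1 (vv s1) x
        * ∫⁻ y in t, ENNReal.ofReal (gaussianPDFReal m2 (vv s2) (x - y))
      = ∫⁻ y in t, ∫⁻ x, ENNReal.ofReal
          (gaussianPDFReal m1 (vv s1) x * gaussianPDFReal m2 (vv s2) (x - y)) := by
    have e1 : ∀ x, gaussianPDF m1 (vv s1) x
          * ∫⁻ y in t, ENNReal.ofReal (gaussianPDFReal m2 (vv s2) (x - y))
        = ∫⁻ y in t, ENNReal.ofReal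
            (gaussianPDFReal m1 (vv s1) x * gaussianPDFReal m2 (vv s2) (x - y)) := by
      intro x
      have hm : Measurable fun y : ℝ => ENNReal.ofReal (gaussianPDFReal m2 (vv s2) (x - y)) := by
        apply Measurable.ennreal_ofReal
        exact (measurable_gaussianPDFReal m2 (vv s2)).comp (measurable_const.sub measurable_id)
      rw [← lintegral_const_mul _ hm]
      congr 1
      ext y
      rw [gaussianPDF_def, ← ENNReal.ofReal_mul (gaussianPDFReal_nonneg _ _ _)]
    simp_rw [e1]
    rw [lintegral_lintegral_swap]
    exact (((measurable_gaussianPDFReal m1 (vv s1)).comp measurable_fst).mul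
      ((measurable_gaussianPDFReal m2 (vv s2)).comp
        (measurable_fst.sub measurable_snd))).ennreal_ofReal.aemeasurable
  simp only [Pi.mul_apply]
  rw [swap]
  have inner : ∀ y, ∫⁻ x, ENNReal.ofReal
        (gaussianPDFReal m1 (vv s1) x * gaussianPDFReal m2 (vv s2) (x - y))
      = ENNReal.ofReal (gaussianPDFReal (m1 - m2) (vv (Real.sqrt (s1 ^ 2 + s2 ^ 2))) y) := by
    intro y
    rw [← ofReal_integral_eq_lintegral_ofReal]
    · rw [prod_pdf hs1 hs2 m1 m2 y]
    · have hbound : ∀ x, ‖gaussianPDFReal m1 (vv s1) x * gaussianPDFReal m2 (vv s2) (x - y)‖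
          ≤ (s2 * Real.sqrt (2 * π))⁻¹ * gaussianPDFReal m1 (vv s1) x := by
        intro x
        rw [Real.norm_eq_abs, abs_of_nonneg (mul_nonneg (gaussianPDFReal_nonneg _ _ _)
          (gaussianPDFReal_nonneg _ _ _)), mul_comm]
        apply mul_le_mul_of_nonneg_right _ (gaussianPDFReal_nonneg _ _ _)
        rw [pdf_eq hs2]
        calc (s2 * Real.sqrt (2 * π))⁻¹ * Real.exp (-(x - y - m2) ^ 2 / (2 * s2 ^ 2))
            ≤ (s2 * Real.sqrt (2 * π))⁻¹ * 1 := by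
              apply mul_le_mul_of_nonneg_left _ (by positivity)
              rw [Real.exp_le_one_iff]
              exact div_nonpos_of_nonpos_of_nonneg (neg_nonpos.mpr (by positivity)) (by positivity)
          _ = (s2 * Real.sqrt (2 * π))⁻¹ := mul_one _
      refine Integrable.mono' ((integrable_gaussianPDFReal m1 (vv s1)).const_mul _) ?_
        (Eventually.of_forall hbound)
      exact ((measurable_gaussianPDFReal m1 (vv s1)).mul
        ((measurable_gaussianPDFReal m2 (vv s2)).comp
          (measurable_id.sub measurable_const))).aestronglyMeasurable
    · exact Eventually.of_forall fun x => mul_nonneg (gaussianPDFReal_nonneg _ _ _)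
        (gaussianPDFReal_nonneg _ _ _)
  simp_rw [inner]
  rw [gaussianReal_apply _ (vv_ne_zero hS) t]
  rfl

lemma abs_moment {s : ℝ} (hs : 0 < s) (m : ℝ) :
    ∫ z, |z| ∂(gaussianReal m (vv s)) = A m s := by
  rw [integral_gaussianReal m (vv s) _ (vv_ne_zero hs)]
  rw [← mom hs m]
  congr 1
  ext z
  ring

lemma crps_term {s1 s2 : ℝ} (hs1 : 0 < s1) (hs2 : 0 < s2) (m1 m2 : ℝ) :
    ∫ p : ℝ × ℝ, |p.1 - p.2| ∂((gaussianReal m1 (vv s1)).prod (gaussianReal m2 (vv s2)))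
      = A (m1 - m2) (Real.sqrt (s1 ^ 2 + s2 ^ 2)) := by
  have hS : 0 < Real.sqrt (s1 ^ 2 + s2 ^ 2) := sqrt_sum_sq_pos hs1 hs2
  have h1 : ∫ p : ℝ × ℝ, |p.1 - p.2| ∂((gaussianReal m1 (vv s1)).prod (gaussianReal m2 (vv s2)))
      = ∫ z, |z| ∂(((gaussianReal m1 (vv s1)).prod (gaussianReal m2 (vv s2))).map
          (fun p : ℝ × ℝ => p.1 - p.2)) := by
    rw [integral_map measurable_sub2.aemeasurable]
    exact continuous_abs.aestronglyMeasurable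
  rw [h1, conv_gauss hs1 hs2 m1 m2, abs_moment hS]

lemma A_zero (t : ℝ) (ht : 0 < t) : A 0 t = 2 * t * (Real.sqrt (2 * π))⁻¹ := by
  rw [A]
  simp [stdGaussPDF]

end CRPSAux

theorem crps_divergence_gaussians (μi μj σi σj : ℝ) (hσi : 0 < σi) (hσj : 0 < σj) :
    (∫ p : ℝ × ℝ, |p.1 - p.2|
        ∂((gaussianReal μi ⟨σi ^ 2, sq_nonneg σi⟩).prod (gaussianReal μj ⟨σj ^ 2, sq_nonneg σj⟩)))
      - (1 / 2) * (∫ p : ℝ × ℝ, |p.1 - p.2|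
        ∂((gaussianReal μi ⟨σi ^ 2, sq_nonneg σi⟩).prod (gaussianReal μi ⟨σi ^ 2, sq_nonneg σi⟩)))
      - (1 / 2) * (∫ p : ℝ × ℝ, |p.1 - p.2|
        ∂((gaussianReal μj ⟨σj ^ 2, sq_nonneg σj⟩).prod (gaussianReal μj ⟨σj ^ 2, sq_nonneg σj⟩))) =
      A (μi - μj) (Real.sqrt (σi ^ 2 + σj ^ 2)) - (σi + σj) / Real.sqrt Real.pi := by
  have h1 := CRPSAux.crps_term hσi hσj μi μj
  have h2 := CRPSAux.crps_term hσi hσi μi μi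
  have h3 := CRPSAux.crps_term hσj hσj μj μj
  have hsame : ∀ σ : ℝ, 0 < σ → ∀ m : ℝ,
      A (m - m) (Real.sqrt (σ ^ 2 + σ ^ 2)) = 2 * σ / Real.sqrt π := by
    intro σ hσ m
    rw [sub_self, CRPSAux.A_zero _ (CRPSAux.sqrt_sum_sq_pos hσ hσ)]
    have e1 : Real.sqrt (σ ^ 2 + σ ^ 2) = Real.sqrt 2 * σ := by
      rw [show σ ^ 2 + σ ^ 2 = 2 * σ ^ 2 by ring, Real.sqrt_mul (by norm_num),
        Real.sqrt_sq hσ.le]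
    have e2 : Real.sqrt (2 * π) = Real.sqrt 2 * Real.sqrt π :=
      Real.sqrt_mul (by norm_num) π
    rw [e1, e2]
    have h2 : Real.sqrt 2 ≠ 0 := by positivity
    have hπ : Real.sqrt π ≠ 0 := by positivity
    field_simp
  rw [show (⟨σi ^ 2, sq_nonneg σi⟩ : NNReal) = CRPSAux.vv σi from rfl,
    show (⟨σj ^ 2, sq_nonneg σj⟩ : NNReal) = CRPSAux.vv σj from rfl] at *
  rw [h1, h2, h3, hsame σi hσi μi, hsame σj hσj μj]
  field_simp
  ring
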